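/- Let r⁺ satisfy the partial cocycle identity (CCI⁺). Then for all configurations γ⁺, γ⁻ ⊆ X and all disjoint finite configurations η₁⁺, η₂⁺: R⁺(γ⁺, γ⁻, η₁⁺ ∪ η₂⁺) = R⁺(γ⁺, γ⁻, η₁⁺)·R⁺(γ⁺ ∪ η₁⁺, γ⁻, η₂⁺). -/
import Mathlib


open scoped NNReal

/-- Iterated product of the partial relative energy density `r⁺` along an
enumeration (list) of a finite configuration. -/
def RplusL {X : Type*} (rp : Set X → Set X → X → ℝ≥0) (γm : Set X) :
    Set X → List X → ℝ≥0
  | _, [] => 1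
  | γp, x :: xs => rp γp γm x * RplusL rp γm (insert x γp) xs

/-- `R⁺(γ⁺, γ⁻, η⁺)`: the iterated product of `r⁺` along a (fixed, arbitrary)
duplicate-free enumeration of the finite configuration `η⁺`; under (CCI⁺) it is
independent of the enumeration. -/
noncomputable def Rplus {X : Type*} (rp : Set X → Set X → X → ℝ≥0)
    (γp γm : Set X) (η : Finset X) : ℝ≥0 :=
  RplusL rp γm γp η.toList

lemma RplusL_perm {X : Type*} (rp : Set X → Set X → X → ℝ≥0)
    (hCCIp : ∀ (γp γm : Set X) (x x' : X),
      rp (insert x' γp) γm x * rp γp γm x' = rp (insert x γp) γm x' * rp γp γm x)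
    (γm : Set X) {l l' : List X} (h : l.Perm l') :
    ∀ γp, RplusL rp γm γp l = RplusL rp γm γp l' := by
  induction h with
  | nil => intro γp; rfl
  | cons x _ ih => intro γp; simp [RplusL, ih]
  | swap x y l =>
      intro γp
      simp only [RplusL]
      rw [Set.insert_comm, ← mul_assoc, ← mul_assoc, mul_comm (rp γp γm y),
        hCCIp γp γm x y, mul_comm (rp (insert x γp) γm y)]
  | trans _ _ ih₁ ih₂ => intro γp; rw [ih₁, ih₂]

lemma RplusL_append {X : Type*} (rp : Set X → Set X → X → ℝ≥0) (γm : Set X) :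
    ∀ (l₁ l₂ : List X) (γp : Set X),
      RplusL rp γm γp (l₁ ++ l₂)
        = RplusL rp γm γp l₁ * RplusL rp γm (γp ∪ {a | a ∈ l₁}) l₂ := by
  intro l₁
  induction l₁ with
  | nil =>
      intro l₂ γp
      simp only [List.nil_append, RplusL, one_mul]
      congr 1
      ext a; simp
  | cons x l ih =>
      intro l₂ γp
      have hs : (insert x γp) ∪ {a | a ∈ l} = γp ∪ {a | a ∈ x :: l} := by
        ext a; simp [Set.insert_def]; tauto
      rw [List.cons_append]
      simp only [RplusL]
      rw [ih, hs, mul_assoc]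

/-- If `r⁺` satisfies the partial cocycle identity (CCI⁺), then for all
configurations `γ⁺, γ⁻` and all disjoint finite configurations `η₁⁺, η₂⁺`:
`R⁺(γ⁺, γ⁻, η₁⁺ ∪ η₂⁺) = R⁺(γ⁺, γ⁻, η₁⁺)·R⁺(γ⁺ ∪ η₁⁺, γ⁻, η₂⁺)`. -/
theorem Rplus_union {X : Type*} [DecidableEq X]
    (rp : Set X → Set X → X → ℝ≥0)
    (hCCIp : ∀ (γp γm : Set X) (x x' : X),
      rp (insert x' γp) γm x * rp γp γm x' = rp (insert x γp) γm x' * rp γp γm x)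
    (γp γm : Set X) (η₁ η₂ : Finset X) (hdisj : Disjoint η₁ η₂) :
    Rplus rp γp γm (η₁ ∪ η₂) = Rplus rp γp γm η₁ * Rplus rp (γp ∪ ↑η₁) γm η₂ := by
  have hperm : (η₁ ∪ η₂).toList.Perm (η₁.toList ++ η₂.toList) := by
    rw [← Multiset.coe_eq_coe, ← Finset.disjUnion_eq_union _ _ hdisj,
      Finset.coe_toList, ← Multiset.coe_add, Finset.coe_toList, Finset.coe_toList]
    rfl
  have hset : (γp ∪ {a | a ∈ η₁.toList}) = γp ∪ ↑η₁ := by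
    ext a; simp
  unfold Rplus
  rw [RplusL_perm rp hCCIp γm hperm, RplusL_append, hset]
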